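/- arXiv:1412.6458 — 4 statements merged into one kernel-verified Lean document; each statement's English description precedes it below -/
import Mathlib

section
/- Let f : [0,T] → ℝ^d be C¹ on [0,T] and locally W^{2,1} on (0,T), with f(t) ≠ 0 for almost every t. Let 0 < θ < 1 and h(λ) = λ^{-θ}, with primitive H(λ) = λ^{1-θ}/(1-θ). Assume that ∫_ε^{T-ε} h(|f(t)|) dt < ∞ for every ε > 0. Then there exists a constant C₂ > 0 depending only on ‖f‖_∞ and θ such that ∫_0^T |f'(t)|² h(|f(t)|) dt ≤ C₂ ∫_0^T |f''(t)| dt + R(f,T) − R(f,0), where R(f,t) = (f(t)·f'(t)/|f(t)|) H(|f(t)|) if f(t) ≠ 0 and R(f,t) = 0 if f(t) = 0. -/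
open MeasureTheory Set Classical Filter Topology intervalIntegral

local notation "⟪" x ", " y "⟫" => @inner ℝ _ _ x y

lemma aux_bound {θ δ M x : ℝ} (hθ₀ : 0 < θ) (hθ₁ : θ < 1) (hδ : 0 < δ) (hδ1 : δ ≤ 1)
    (hx : 0 ≤ x) (hxM : x ≤ M) : x * (x^2 + δ) ^ (-θ/2 : ℝ) ≤ (M^2+1) ^ ((1-θ)/2 : ℝ) := by
  have hb : (0:ℝ) < x^2 + δ := by positivity
  have h1 : x ≤ (x^2 + δ) ^ ((1:ℝ)/2) := by
    have h0 : x = (x^2 : ℝ) ^ ((1:ℝ)/2) := by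
      rw [← Real.rpow_natCast x 2, ← Real.rpow_mul hx]; norm_num
    calc x = (x^2 : ℝ) ^ ((1:ℝ)/2) := h0
      _ ≤ (x^2 + δ) ^ ((1:ℝ)/2) :=
        Real.rpow_le_rpow (by positivity) (by linarith) (by norm_num)
  have h2 : x * (x^2+δ) ^ (-θ/2 : ℝ) ≤ (x^2+δ) ^ ((1:ℝ)/2) * (x^2+δ) ^ (-θ/2 : ℝ) :=
    mul_le_mul_of_nonneg_right h1 (Real.rpow_nonneg hb.le _)
  rw [← Real.rpow_add hb] at h2
  refine h2.trans ?_
  have hexp : (1:ℝ)/2 + -θ/2 = (1-θ)/2 := by ring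
  rw [hexp]
  refine Real.rpow_le_rpow hb.le ?_ (by linarith)
  nlinarith [sq_nonneg x, sq_nonneg M]

lemma aux_ptwise {θ δ : ℝ} (hθ₀ : 0 < θ) (hθ₁ : θ < 1) (hδ : 0 < δ)
    {E : Type*} [NormedAddCommGroup E] [InnerProductSpace ℝ E] (x y : E) :
    (1-θ) * (‖y‖^2 * (‖x‖^2 + δ) ^ (-θ/2 : ℝ)) ≤
      ⟪y, y⟫ * (‖x‖^2 + δ) ^ (-θ/2 : ℝ) +
        ⟪x, y⟫ * ((⟪x, y⟫ + ⟪y, x⟫) * (-θ/2) * (‖x‖^2 + δ) ^ (-θ/2 - 1 : ℝ)) := by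
  have hb : (0:ℝ) < ‖x‖^2 + δ := by positivity
  have hyy : ⟪y, y⟫ = ‖y‖^2 := real_inner_self_eq_norm_sq y
  have hcomm : ⟪y, x⟫ = ⟪x, y⟫ := (real_inner_comm y x).symm
  have hsplit : (‖x‖^2 + δ) ^ (-θ/2 - 1 : ℝ) = (‖x‖^2 + δ) ^ (-θ/2 : ℝ) / (‖x‖^2 + δ) := by
    rw [Real.rpow_sub hb, Real.rpow_one]
  have hcs : ⟪x, y⟫ * ⟪x, y⟫ ≤ ‖x‖^2 * ‖y‖^2 := by
    have h := abs_real_inner_le_norm x y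
    nlinarith [abs_nonneg (⟪x, y⟫), le_abs_self (⟪x, y⟫), neg_abs_le (⟪x, y⟫)]
  have hkey : ⟪x, y⟫ * ⟪x, y⟫ * (‖x‖^2 + δ)⁻¹ ≤ ‖y‖^2 := by
    rw [mul_inv_le_iff₀ hb]
    nlinarith [sq_nonneg ‖y‖]
  rw [hyy, hcomm, hsplit]
  set ψ := (‖x‖^2+δ) ^ (-θ/2:ℝ) with hψdef
  have hψ0 : 0 ≤ ψ := Real.rpow_nonneg hb.le _
  have hex : ⟪x, y⟫ * ((⟪x,y⟫ + ⟪x,y⟫) * (-θ/2) * (ψ/(‖x‖^2+δ))) =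
      -(θ * ((⟪x,y⟫*⟪x,y⟫*(‖x‖^2+δ)⁻¹) * ψ)) := by
    field_simp
    ring
  rw [hex]
  nlinarith [mul_le_mul_of_nonneg_right hkey (mul_nonneg hθ₀.le hψ0)]



set_option maxHeartbeats 2000000 in
lemma key_ineq {d : ℕ} {T θ : ℝ} (hT : 0 < T) (hθ₀ : 0 < θ) (hθ₁ : θ < 1)
    {f f' f'' : ℝ → EuclideanSpace ℝ (Fin d)}
    (hderiv : ∀ t ∈ Icc (0 : ℝ) T, HasDerivAt f (f' t) t)
    (hf'cont : ContinuousOn f' (Icc (0 : ℝ) T))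
    (hf''loc : ∀ s ∈ Ioo (0 : ℝ) T, ∀ t ∈ Ioo (0 : ℝ) T,
      f' t - f' s = ∫ u in s..t, f'' u)
    (hf''int : IntegrableOn (fun t => ‖f'' t‖) (Ioc (0 : ℝ) T))
    {M M' : ℝ} (hM : ∀ t ∈ Icc (0 : ℝ) T, ‖f t‖ ≤ M)
    (hM' : ∀ t ∈ Icc (0 : ℝ) T, ‖f' t‖ ≤ M')
    {a b δ : ℝ} (ha : 0 < a) (hab : a ≤ b) (hbT : b < T) (hδ : 0 < δ) (hδ1 : δ ≤ 1) :
    ∫ t in a..b, ‖f' t‖^2 * (‖f t‖^2 + δ) ^ (-θ/2 : ℝ) ≤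
      ((M^2+1) ^ ((1-θ)/2 : ℝ) * (∫ t in Ioc (0:ℝ) T, ‖f'' t‖)
        + (⟪f b, f' b⟫ * (‖f b‖^2+δ) ^ (-θ/2 : ℝ)
           - ⟪f a, f' a⟫ * (‖f a‖^2+δ) ^ (-θ/2 : ℝ))) / (1-θ) := by
  have hθ1' : (0:ℝ) < 1 - θ := by linarith
  set I : ℝ := ∫ t in Ioc (0:ℝ) T, ‖f'' t‖ with hIdef
  set c₂ : ℝ := (M^2+1) ^ ((1-θ)/2 : ℝ) with hc₂def
  have hc₂0 : 0 ≤ c₂ := Real.rpow_nonneg (by positivity) _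
  set ψ : ℝ → ℝ := fun t => (‖f t‖^2 + δ) ^ (-θ/2 : ℝ) with hψdef
  set ψd : ℝ → ℝ := fun t =>
    (⟪f t, f' t⟫ + ⟪f' t, f t⟫) * (-θ/2) * (‖f t‖^2 + δ) ^ (-θ/2 - 1 : ℝ) with hψddef
  set hk : ℕ → ℝ := fun k => (T - b)/(k+2) with hhkdef
  set G : ℕ → ℝ → EuclideanSpace ℝ (Fin d) :=
    fun k t => (hk k)⁻¹ • (f (t + hk k) - f t) with hGdef
  set G' : ℕ → ℝ → EuclideanSpace ℝ (Fin d) :=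
    fun k t => (hk k)⁻¹ • (f' (t + hk k) - f' t) with hG'def
  set Φ : ℝ → ℝ := fun t => ∫ u in Ioc (0:ℝ) (min t T), ‖f'' u‖ with hΦdef
  have hTb : 0 < T - b := by linarith
  have hhk0 : ∀ k : ℕ, 0 < hk k := fun k => by
    have : (0:ℝ) < (k:ℝ) + 2 := by positivity
    exact div_pos hTb this
  have hhkTb : ∀ k : ℕ, hk k < T - b := fun k => by
    rw [hhkdef]
    have h2 : (1:ℝ) < (k:ℝ) + 2 := by
      have : (0:ℝ) ≤ (k:ℝ) := Nat.cast_nonneg k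
      linarith
    calc (T - b)/((k:ℝ)+2) < (T-b)/1 := by
          apply div_lt_div_of_pos_left hTb (by norm_num) h2
      _ = T - b := by norm_num
  have hIccsub : Icc a b ⊆ Icc (0:ℝ) T := Icc_subset_Icc ha.le hbT.le
  have hmemsh : ∀ (k : ℕ), ∀ t ∈ Icc a b, t + hk k ∈ Icc (0:ℝ) T := by
    intro k t ht
    constructor
    · have := (hIccsub ht).1; have := (hhk0 k).le; linarith
    · have := ht.2; have := hhkTb k; linarith
  have hfc : ContinuousOn f (Icc (0:ℝ) T) :=
    fun t ht => (hderiv t ht).continuousAt.continuousWithinAt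
  -- continuity pieces on Icc a b
  have hf_ab : ContinuousOn f (Icc a b) := hfc.mono hIccsub
  have hf'_ab : ContinuousOn f' (Icc a b) := hf'cont.mono hIccsub
  have hfsh : ∀ k : ℕ, ContinuousOn (fun t => f (t + hk k)) (Icc a b) := fun k =>
    hfc.comp ((continuous_id.add continuous_const).continuousOn) (fun t ht => hmemsh k t ht)
  have hf'sh : ∀ k : ℕ, ContinuousOn (fun t => f' (t + hk k)) (Icc a b) := fun k =>
    hf'cont.comp ((continuous_id.add continuous_const).continuousOn) (fun t ht => hmemsh k t ht)
  have hGc : ∀ k : ℕ, ContinuousOn (G k) (Icc a b) := fun k =>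
    ((hfsh k).sub hf_ab).const_smul ((hk k)⁻¹)
  have hG'c : ∀ k : ℕ, ContinuousOn (G' k) (Icc a b) := fun k =>
    ((hf'sh k).sub hf'_ab).const_smul ((hk k)⁻¹)
  have hbase : ∀ t : ℝ, (0:ℝ) < ‖f t‖^2 + δ := fun t => by positivity
  have hψc : ContinuousOn ψ (Icc a b) := by
    apply ContinuousOn.rpow_const
    · exact (hf_ab.norm.pow 2).add continuousOn_const
    · exact fun t _ => Or.inl (ne_of_gt (hbase t))
  have hψdc : ContinuousOn ψd (Icc a b) := by
    apply ContinuousOn.mul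
    · exact ((hf_ab.inner hf'_ab).add (hf'_ab.inner hf_ab)).mul continuousOn_const
    · apply ContinuousOn.rpow_const
      · exact (hf_ab.norm.pow 2).add continuousOn_const
      · exact fun t _ => Or.inl (ne_of_gt (hbase t))
  -- Φ facts
  have hΦmono : Monotone Φ := by
    intro s t hst
    apply setIntegral_mono_set
    · exact hf''int.mono_set (Ioc_subset_Ioc le_rfl (min_le_right _ _))
    · exact Eventually.of_forall (fun u => norm_nonneg _)
    · exact HasSubset.Subset.eventuallyLE (Ioc_subset_Ioc le_rfl (min_le_min_right _ hst))
  have hΦ0 : ∀ t, 0 ≤ Φ t := fun t =>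
    setIntegral_nonneg measurableSet_Ioc (fun u _ => norm_nonneg _)
  have hΦT : Φ T = I := by rw [hΦdef]; simp [hIdef]
  have hΦint : ∀ u v : ℝ, IntervalIntegrable Φ volume u v := fun u v =>
    hΦmono.intervalIntegrable
  have hgrow : ∀ s t : ℝ, 0 < s → s ≤ t → t < T → ‖f' t - f' s‖ ≤ Φ t - Φ s := by
    intro s t hs0 hst htT
    have hsT : s < T := lt_of_le_of_lt hst htT
    have heq : f' t - f' s = ∫ u in s..t, f'' u :=
      hf''loc s ⟨hs0, hsT⟩ t ⟨lt_of_lt_of_le hs0 hst, htT⟩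
    have hΦst : Φ t - Φ s = ∫ u in Ioc s t, ‖f'' u‖ := by
      have hmins : min s T = s := min_eq_left hsT.le
      have hmint : min t T = t := min_eq_left htT.le
      rw [hΦdef]
      simp only [hmins, hmint]
      have hunion : Ioc (0:ℝ) s ∪ Ioc s t = Ioc (0:ℝ) t :=
        Ioc_union_Ioc_eq_Ioc hs0.le hst
      have hdisj : Disjoint (Ioc (0:ℝ) s) (Ioc s t) := Ioc_disjoint_Ioc_of_le le_rfl
      have hi1 : IntegrableOn (fun u => ‖f'' u‖) (Ioc (0:ℝ) s) :=
        hf''int.mono_set (Ioc_subset_Ioc le_rfl hsT.le)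
      have hi2 : IntegrableOn (fun u => ‖f'' u‖) (Ioc s t) :=
        hf''int.mono_set (Ioc_subset_Ioc hs0.le htT.le)
      rw [← hunion, setIntegral_union hdisj measurableSet_Ioc hi1 hi2]
      ring
    rw [heq]
    calc ‖∫ u in s..t, f'' u‖ ≤ |∫ u in s..t, ‖f'' u‖| :=
          intervalIntegral.norm_integral_le_abs_integral_norm
      _ = Φ t - Φ s := by
          rw [intervalIntegral.integral_of_le hst, ← hΦst]
          exact abs_of_nonneg (by
            rw [hΦst]
            exact setIntegral_nonneg measurableSet_Ioc (fun u _ => norm_nonneg _))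
  -- derivative of the boundary function
  have hD : ∀ k : ℕ, ∀ t ∈ uIcc a b,
      HasDerivAt (fun t => ⟪f t, G k t⟫ * ψ t)
        ((⟪f t, G' k t⟫ + ⟪f' t, G k t⟫) * ψ t + ⟪f t, G k t⟫ * ψd t) t := by
    intro k t ht
    rw [uIcc_of_le hab] at ht
    have ht0T : t ∈ Icc (0:ℝ) T := hIccsub ht
    have hth : t + hk k ∈ Icc (0:ℝ) T := hmemsh k t ht
    have hshift : HasDerivAt (fun s => f (s + hk k)) (f' (t + hk k)) t := by
      have h1 := (hderiv _ hth).scomp t ((hasDerivAt_id t).add_const (hk k))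
      simpa [Function.comp_def] using h1
    have hg : HasDerivAt (G k) (G' k t) t := by
      have h2 := (hshift.sub (hderiv t ht0T)).const_smul ((hk k)⁻¹)
      exact h2
    have hA : HasDerivAt (fun t => (⟪f t, G k t⟫ : ℝ))
        (⟪f t, G' k t⟫ + ⟪f' t, G k t⟫) t :=
      (hderiv t ht0T).inner ℝ hg
    have hB : HasDerivAt (fun t => ‖f t‖^2 + δ) (⟪f t, f' t⟫ + ⟪f' t, f t⟫) t := by
      have h3 := (hderiv t ht0T).inner ℝ (hderiv t ht0T)
      have h4 : (fun t => (⟪f t, f t⟫ : ℝ)) = fun t => ‖f t‖^2 :=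
        funext fun s => real_inner_self_eq_norm_sq (f s)
      rw [h4] at h3
      simpa using h3.add_const δ
    have hψt : HasDerivAt ψ (ψd t) t := by
      have h5 := hB.rpow_const (p := -θ/2) (Or.inl (ne_of_gt (hbase t)))
      simpa [hψdef, hψddef] using h5
    exact hA.mul hψt
  -- FTC identity
  have hDcont : ∀ k : ℕ, ContinuousOn
      (fun t => (⟪f t, G' k t⟫ + ⟪f' t, G k t⟫) * ψ t + ⟪f t, G k t⟫ * ψd t) (Icc a b) :=
    fun k => (((hf_ab.inner (hG'c k)).add (hf'_ab.inner (hGc k))).mul hψc).add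
      ((hf_ab.inner (hGc k)).mul hψdc)
  have hFTC : ∀ k : ℕ,
      (∫ t in a..b, ((⟪f t, G' k t⟫ + ⟪f' t, G k t⟫) * ψ t + ⟪f t, G k t⟫ * ψd t))
        = ⟪f b, G k b⟫ * ψ b - ⟪f a, G k a⟫ * ψ a := by
    intro k
    apply intervalIntegral.integral_eq_sub_of_hasDerivAt (hD k)
    apply ContinuousOn.intervalIntegrable
    rw [uIcc_of_le hab]
    exact hDcont k
  -- error term bound
  have hg'norm : ∀ (k : ℕ), ∀ t ∈ Icc a b, ‖G' k t‖ ≤ (hk k)⁻¹ * (Φ (t + hk k) - Φ t) := by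
    intro k t ht
    have h1 : ‖G' k t‖ = (hk k)⁻¹ * ‖f' (t + hk k) - f' t‖ := by
      rw [hG'def]
      simp only [norm_smul, norm_inv, Real.norm_eq_abs, abs_of_pos (hhk0 k)]
    rw [h1]
    apply mul_le_mul_of_nonneg_left _ (inv_pos.2 (hhk0 k)).le
    have h2 : 0 < t := lt_of_lt_of_le ha ht.1
    have h3 : t ≤ t + hk k := by have := (hhk0 k).le; linarith
    have h4 : t + hk k < T := by have := ht.2; have := hhkTb k; linarith
    exact hgrow t (t + hk k) h2 h3 h4
  have hg'int : ∀ k : ℕ, (∫ t in a..b, ‖G' k t‖) ≤ I := by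
    intro k
    have hΦsh : Monotone (fun t => Φ (t + hk k)) := hΦmono.comp (fun u v huv => by linarith)
    have hint1 : IntervalIntegrable (fun t => (hk k)⁻¹ * (Φ (t + hk k) - Φ t)) volume a b :=
      (hΦsh.intervalIntegrable.sub hΦmono.intervalIntegrable).const_mul _
    have step1 : (∫ t in a..b, ‖G' k t‖) ≤
        ∫ t in a..b, (hk k)⁻¹ * (Φ (t + hk k) - Φ t) := by
      apply intervalIntegral.integral_mono_on hab _ hint1 (hg'norm k)
      apply ContinuousOn.intervalIntegrable
      rw [uIcc_of_le hab]
      exact (hG'c k).norm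
    have step2 : (∫ t in a..b, (hk k)⁻¹ * (Φ (t + hk k) - Φ t))
        = (hk k)⁻¹ * ((∫ t in a..b, Φ (t + hk k)) - ∫ t in a..b, Φ t) := by
      rw [intervalIntegral.integral_const_mul,
        intervalIntegral.integral_sub hΦsh.intervalIntegrable hΦmono.intervalIntegrable]
    have step3 : (∫ t in a..b, Φ (t + hk k)) = ∫ t in a + hk k..b + hk k, Φ t :=
      intervalIntegral.integral_comp_add_right Φ (hk k)
    have add1 : (∫ t in a..a + hk k, Φ t) + (∫ t in a + hk k..b + hk k, Φ t)
        = ∫ t in a..b + hk k, Φ t :=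
      intervalIntegral.integral_add_adjacent_intervals (hΦint _ _) (hΦint _ _)
    have add2 : (∫ t in a..b, Φ t) + (∫ t in b..b + hk k, Φ t) = ∫ t in a..b + hk k, Φ t :=
      intervalIntegral.integral_add_adjacent_intervals (hΦint _ _) (hΦint _ _)
    have hbk : b ≤ b + hk k := by have := (hhk0 k).le; linarith
    have up : (∫ t in b..b + hk k, Φ t) ≤ hk k * Φ (b + hk k) := by
      have h5 : (∫ t in b..b + hk k, Φ t) ≤ ∫ _t in b..b + hk k, Φ (b + hk k) :=
        intervalIntegral.integral_mono_on hbk (hΦint _ _) intervalIntegrable_const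
          (fun x hx => hΦmono hx.2)
      simpa [add_sub_cancel_left, smul_eq_mul] using h5
    have lo : 0 ≤ ∫ t in a..a + hk k, Φ t :=
      intervalIntegral.integral_nonneg (by have := (hhk0 k).le; linarith)
        (fun u _ => hΦ0 u)
    have hΦbk : Φ (b + hk k) ≤ I := by
      rw [← hΦT]
      exact hΦmono (by have := hhkTb k; linarith)
    calc (∫ t in a..b, ‖G' k t‖) ≤
          (hk k)⁻¹ * ((∫ t in a..b, Φ (t + hk k)) - ∫ t in a..b, Φ t) := by
          rw [← step2]; exact step1
      _ ≤ (hk k)⁻¹ * (hk k * Φ (b + hk k)) := by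
          apply mul_le_mul_of_nonneg_left _ (inv_pos.2 (hhk0 k)).le
          rw [step3]
          linarith
      _ = Φ (b + hk k) := by
          rw [inv_mul_cancel_left₀ (hhk0 k).ne']
      _ ≤ I := hΦbk
  have herr : ∀ k : ℕ, -(c₂ * I) ≤ ∫ t in a..b, ⟪f t, G' k t⟫ * ψ t := by
    intro k
    have hptw : ∀ t ∈ Icc a b, -(c₂ * ‖G' k t‖) ≤ ⟪f t, G' k t⟫ * ψ t := by
      intro t ht
      have hψ0 : 0 ≤ ψ t := Real.rpow_nonneg (hbase t).le _
      have hcs : |⟪f t, G' k t⟫| ≤ ‖f t‖ * ‖G' k t‖ := abs_real_inner_le_norm _ _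
      have hfb : ‖f t‖ * ψ t ≤ c₂ :=
        aux_bound hθ₀ hθ₁ hδ hδ1 (norm_nonneg _) (hM t (hIccsub ht))
      have h6 : |⟪f t, G' k t⟫ * ψ t| ≤ c₂ * ‖G' k t‖ := by
        rw [abs_mul, abs_of_nonneg hψ0]
        calc |⟪f t, G' k t⟫| * ψ t ≤ (‖f t‖ * ‖G' k t‖) * ψ t :=
              mul_le_mul_of_nonneg_right hcs hψ0
          _ = (‖f t‖ * ψ t) * ‖G' k t‖ := by ring
          _ ≤ c₂ * ‖G' k t‖ :=
              mul_le_mul_of_nonneg_right hfb (norm_nonneg _)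
      linarith [neg_abs_le (⟪f t, G' k t⟫ * ψ t)]
    have hi1 : IntervalIntegrable (fun t => -(c₂ * ‖G' k t‖)) volume a b := by
      apply ContinuousOn.intervalIntegrable
      rw [uIcc_of_le hab]
      exact (((hG'c k).norm).const_smul c₂).neg
    have hi2 : IntervalIntegrable (fun t => ⟪f t, G' k t⟫ * ψ t) volume a b := by
      apply ContinuousOn.intervalIntegrable
      rw [uIcc_of_le hab]
      exact (hf_ab.inner (hG'c k)).mul hψc
    have h7 := intervalIntegral.integral_mono_on hab hi1 hi2 hptw
    have h8 : (∫ t in a..b, -(c₂ * ‖G' k t‖)) = -(c₂ * ∫ t in a..b, ‖G' k t‖) := by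
      rw [intervalIntegral.integral_neg, intervalIntegral.integral_const_mul]
    rw [h8] at h7
    have h9 : -(c₂ * I) ≤ -(c₂ * ∫ t in a..b, ‖G' k t‖) := by
      have := mul_le_mul_of_nonneg_left (hg'int k) hc₂0
      linarith
    linarith
  -- convergence of difference quotients
  have hkto0 : Tendsto hk atTop (𝓝 0) := by
    apply Filter.Tendsto.div_atTop (tendsto_const_nhds)
    exact tendsto_atTop_add_const_right _ 2 tendsto_natCast_atTop_atTop
  have hGlim : ∀ t ∈ Icc a b, Tendsto (fun k => G k t) atTop (𝓝 (f' t)) := by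
    intro t ht
    have hslope := hasDerivAt_iff_tendsto_slope.1 (hderiv t (hIccsub ht))
    have hseq : Tendsto (fun k => t + hk k) atTop (𝓝[≠] t) := by
      apply tendsto_nhdsWithin_of_tendsto_nhds_of_eventually_within
      · simpa using tendsto_const_nhds.add hkto0
      · refine Eventually.of_forall (fun k => ?_)
        have h0 := hhk0 k
        simp only [mem_compl_iff, mem_singleton_iff]
        intro hcon
        linarith
    have hcomp := hslope.comp hseq
    have heq : (fun k => slope f t (t + hk k)) = fun k => G k t := by
      funext k
      rw [slope_def_module]
      simp [hGdef, add_sub_cancel_left]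
    rw [← heq]
    exact hcomp
  have hM'0 : 0 ≤ M' := le_trans (norm_nonneg (f' 0)) (hM' 0 ⟨le_rfl, hT.le⟩)
  have hM0 : 0 ≤ M := le_trans (norm_nonneg (f 0)) (hM 0 ⟨le_rfl, hT.le⟩)
  have hGbdd : ∀ (k : ℕ), ∀ t ∈ Icc a b, ‖G k t‖ ≤ M' := by
    intro k t ht
    have hle : t ≤ t + hk k := by linarith [hhk0 k]
    have hsub2 : uIcc t (t + hk k) ⊆ Icc (0:ℝ) T := by
      rw [uIcc_of_le hle]
      exact Icc_subset_Icc (hIccsub ht).1 (hmemsh k t ht).2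
    have hFTC2 : (∫ u in t..t + hk k, f' u) = f (t + hk k) - f t :=
      intervalIntegral.integral_eq_sub_of_hasDerivAt
        (fun u hu => hderiv u (hsub2 hu))
        ((hf'cont.mono hsub2).intervalIntegrable)
    have hnb : ‖∫ u in t..t + hk k, f' u‖ ≤ M' * |t + hk k - t| := by
      apply intervalIntegral.norm_integral_le_of_norm_le_const
      intro u hu
      rw [uIoc_of_le hle] at hu
      exact hM' u (hsub2 (by rw [uIcc_of_le hle]; exact Ioc_subset_Icc_self hu))
    have habs : |t + hk k - t| = hk k := by
      rw [add_sub_cancel_left]; exact abs_of_pos (hhk0 k)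
    calc ‖G k t‖ = (hk k)⁻¹ * ‖f (t + hk k) - f t‖ := by
          rw [hGdef]
          simp only [norm_smul, norm_inv, Real.norm_eq_abs, abs_of_pos (hhk0 k)]
      _ ≤ (hk k)⁻¹ * (M' * hk k) := by
          apply mul_le_mul_of_nonneg_left _ (inv_pos.2 (hhk0 k)).le
          rw [← hFTC2]
          rw [habs] at hnb
          exact hnb
      _ = M' := by rw [mul_comm M', inv_mul_cancel_left₀ (hhk0 k).ne']
  have hbnd : ∀ (k : ℕ), ∀ t ∈ Icc a b,
      |⟪f' t, G k t⟫ * ψ t + ⟪f t, G k t⟫ * ψd t| ≤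
        M' * M' * δ ^ (-θ/2 : ℝ) + M * M' * ((M*M' + M*M') * (θ/2) * δ ^ (-θ/2-1 : ℝ)) := by
    intro k t ht
    have htT := hIccsub ht
    have hψle : ψ t ≤ δ ^ (-θ/2 : ℝ) :=
      Real.rpow_le_rpow_of_nonpos hδ (by nlinarith [sq_nonneg ‖f t‖]) (by linarith)
    have hψ0 : 0 ≤ ψ t := Real.rpow_nonneg (hbase t).le _
    have hψdle : |ψd t| ≤ (M*M' + M*M') * (θ/2) * δ ^ (-θ/2-1 : ℝ) := by
      have h1 : |⟪f t, f' t⟫ + ⟪f' t, f t⟫| ≤ M*M' + M*M' := by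
        calc |⟪f t, f' t⟫ + ⟪f' t, f t⟫| ≤ |⟪f t, f' t⟫| + |⟪f' t, f t⟫| := abs_add_le _ _
          _ ≤ M*M' + M*M' := by
            apply add_le_add
            · exact (abs_real_inner_le_norm _ _).trans
                (mul_le_mul (hM t htT) (hM' t htT) (norm_nonneg _) hM0)
            · exact (abs_real_inner_le_norm _ _).trans
                (by nlinarith [mul_le_mul (hM' t htT) (hM t htT) (norm_nonneg _) hM'0])
      have h2 : |(-θ/2 : ℝ)| = θ/2 := by
        rw [abs_of_nonpos (by linarith)]; ring
      have h3 : |(‖f t‖^2+δ) ^ (-θ/2-1 : ℝ)| ≤ δ ^ (-θ/2-1 : ℝ) := by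
        rw [abs_of_nonneg (Real.rpow_nonneg (hbase t).le _)]
        exact Real.rpow_le_rpow_of_nonpos hδ (by nlinarith [sq_nonneg ‖f t‖]) (by linarith)
      calc |ψd t| = |⟪f t, f' t⟫ + ⟪f' t, f t⟫| * |(-θ/2 : ℝ)| * |(‖f t‖^2+δ) ^ (-θ/2-1 : ℝ)| := by
            rw [hψddef]; rw [abs_mul, abs_mul]
        _ ≤ (M*M' + M*M') * (θ/2) * δ ^ (-θ/2-1 : ℝ) := by
            rw [h2]
            apply mul_le_mul _ h3 (abs_nonneg _) (by positivity)
            exact mul_le_mul_of_nonneg_right h1 (by linarith)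
    have h4 : |⟪f' t, G k t⟫| ≤ M' * M' := (abs_real_inner_le_norm _ _).trans
      (mul_le_mul (hM' t htT) (hGbdd k t ht) (norm_nonneg _) hM'0)
    have h5 : |⟪f t, G k t⟫| ≤ M * M' := (abs_real_inner_le_norm _ _).trans
      (mul_le_mul (hM t htT) (hGbdd k t ht) (norm_nonneg _) hM0)
    calc |⟪f' t, G k t⟫ * ψ t + ⟪f t, G k t⟫ * ψd t|
        ≤ |⟪f' t, G k t⟫| * ψ t + |⟪f t, G k t⟫| * |ψd t| := by
          refine (abs_add_le _ _).trans ?_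
          rw [abs_mul, abs_mul, abs_of_nonneg hψ0]
      _ ≤ M' * M' * δ ^ (-θ/2 : ℝ) + M * M' * ((M*M' + M*M') * (θ/2) * δ ^ (-θ/2-1 : ℝ)) := by
          apply add_le_add
          · exact mul_le_mul h4 hψle hψ0 (by positivity)
          · exact mul_le_mul h5 hψdle (abs_nonneg _) (by positivity)
  have hΙsub : uIoc a b ⊆ Icc a b := by
    rw [uIoc_of_le hab]; exact Ioc_subset_Icc_self
  have hlim1 : Tendsto (fun k => ∫ t in a..b, (⟪f' t, G k t⟫ * ψ t + ⟪f t, G k t⟫ * ψd t))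
      atTop (𝓝 (∫ t in a..b, (⟪f' t, f' t⟫ * ψ t + ⟪f t, f' t⟫ * ψd t))) := by
    apply intervalIntegral.tendsto_integral_filter_of_dominated_convergence
      (bound := fun _ => M' * M' * δ ^ (-θ/2 : ℝ) + M * M' * ((M*M' + M*M') * (θ/2) * δ ^ (-θ/2-1 : ℝ)))
    · refine Eventually.of_forall (fun k => ?_)
      apply ContinuousOn.aestronglyMeasurable _ measurableSet_uIoc
      exact (((hf'_ab.inner (hGc k)).mul hψc).add ((hf_ab.inner (hGc k)).mul hψdc)).mono hΙsub
    · refine Eventually.of_forall (fun k => ae_of_all _ (fun t ht => ?_))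
      rw [Real.norm_eq_abs]
      exact hbnd k t (hΙsub ht)
    · exact intervalIntegrable_const
    · refine ae_of_all _ (fun t ht => ?_)
      exact ((tendsto_const_nhds.inner (hGlim t (hΙsub ht))).mul tendsto_const_nhds).add
        ((tendsto_const_nhds.inner (hGlim t (hΙsub ht))).mul tendsto_const_nhds)
  have hlim2 : Tendsto (fun k => c₂ * I + (⟪f b, G k b⟫ * ψ b - ⟪f a, G k a⟫ * ψ a)) atTop
      (𝓝 (c₂ * I + (⟪f b, f' b⟫ * ψ b - ⟪f a, f' a⟫ * ψ a))) :=
    tendsto_const_nhds.add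
      (((tendsto_const_nhds.inner (hGlim b (right_mem_Icc.2 hab))).mul tendsto_const_nhds).sub
        ((tendsto_const_nhds.inner (hGlim a (left_mem_Icc.2 hab))).mul tendsto_const_nhds))
  have main_k : ∀ k : ℕ,
      (∫ t in a..b, (⟪f' t, G k t⟫ * ψ t + ⟪f t, G k t⟫ * ψd t)) ≤
        c₂ * I + (⟪f b, G k b⟫ * ψ b - ⟪f a, G k a⟫ * ψ a) := by
    intro k
    have hiF : IntervalIntegrable (fun t => ⟪f' t, G k t⟫ * ψ t + ⟪f t, G k t⟫ * ψd t)
        volume a b := by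
      apply ContinuousOn.intervalIntegrable
      rw [uIcc_of_le hab]
      exact ((hf'_ab.inner (hGc k)).mul hψc).add ((hf_ab.inner (hGc k)).mul hψdc)
    have hiE : IntervalIntegrable (fun t => ⟪f t, G' k t⟫ * ψ t) volume a b := by
      apply ContinuousOn.intervalIntegrable
      rw [uIcc_of_le hab]
      exact (hf_ab.inner (hG'c k)).mul hψc
    have hre : (∫ t in a..b, ((⟪f t, G' k t⟫ + ⟪f' t, G k t⟫) * ψ t + ⟪f t, G k t⟫ * ψd t))
        = (∫ t in a..b, (⟪f' t, G k t⟫ * ψ t + ⟪f t, G k t⟫ * ψd t))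
          + ∫ t in a..b, ⟪f t, G' k t⟫ * ψ t := by
      rw [← intervalIntegral.integral_add hiF hiE]
      apply intervalIntegral.integral_congr
      intro t _
      ring
    have h10 := hFTC k
    rw [hre] at h10
    linarith [herr k]
  have hfinal1 : (∫ t in a..b, (⟪f' t, f' t⟫ * ψ t + ⟪f t, f' t⟫ * ψd t)) ≤
      c₂ * I + (⟪f b, f' b⟫ * ψ b - ⟪f a, f' a⟫ * ψ a) :=
    le_of_tendsto_of_tendsto' hlim1 hlim2 main_k
  have hptw2 : ∀ t ∈ Icc a b, (1-θ) * (‖f' t‖^2 * ψ t) ≤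
      ⟪f' t, f' t⟫ * ψ t + ⟪f t, f' t⟫ * ψd t := by
    intro t _
    have := aux_ptwise hθ₀ hθ₁ hδ (f t) (f' t)
    simpa [hψdef, hψddef] using this
  have hfinal2 : (1-θ) * (∫ t in a..b, ‖f' t‖^2 * ψ t) ≤
      ∫ t in a..b, (⟪f' t, f' t⟫ * ψ t + ⟪f t, f' t⟫ * ψd t) := by
    rw [← intervalIntegral.integral_const_mul]
    apply intervalIntegral.integral_mono_on hab _ _ hptw2
    · apply ContinuousOn.intervalIntegrable
      rw [uIcc_of_le hab]
      exact continuousOn_const.mul ((hf'_ab.norm.pow 2).mul hψc)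
    · apply ContinuousOn.intervalIntegrable
      rw [uIcc_of_le hab]
      exact ((hf'_ab.inner hf'_ab).mul hψc).add ((hf_ab.inner hf'_ab).mul hψdc)
  rw [le_div_iff₀ hθ1']
  nlinarith [hfinal1, hfinal2]

/-- Interpolation inequality (Lemma 4.1): for `f : [0,T] → ℝ^d` which is `C¹` on `[0,T]`
and locally `W^{2,1}` on `(0,T)` (weak second derivative `f''`), nonzero a.e., with
`h(λ) = λ^{-θ}`, `0 < θ < 1`, and `∫_ε^{T-ε} h(|f|) < ∞` for all `ε > 0`, there is
`C₂ > 0` with `∫_0^T |f'|² h(|f|) ≤ C₂ ∫_0^T |f''| + R(f,T) - R(f,0)`. -/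
theorem stmt_0
    (d : ℕ) (T θ : ℝ) (hT : 0 < T) (hθ₀ : 0 < θ) (hθ₁ : θ < 1)
    (f f' f'' : ℝ → EuclideanSpace ℝ (Fin d))
    -- `f` is C¹ on `[0,T]` with derivative `f'`
    (hderiv : ∀ t ∈ Icc (0 : ℝ) T, HasDerivAt f (f' t) t)
    (hf'cont : ContinuousOn f' (Icc (0 : ℝ) T))
    -- `f` is locally `W^{2,1}` on `(0,T)` with weak second derivative `f''`
    (hf''loc : ∀ s ∈ Ioo (0 : ℝ) T, ∀ t ∈ Ioo (0 : ℝ) T,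
      f' t - f' s = ∫ u in s..t, f'' u)
    -- nontrivial case: `f''` is integrable on `[0,T]` (otherwise the inequality is trivial)
    (hf''int : IntegrableOn (fun t => ‖f'' t‖) (Ioc (0 : ℝ) T))
    -- `f ≠ 0` almost everywhere
    (hne : ∀ᵐ t ∂(volume.restrict (Icc (0 : ℝ) T)), f t ≠ 0)
    -- assumption (4.2): `∫_ε^{T-ε} h(|f|) dt < ∞` for all `ε > 0`
    (hint : ∀ ε > (0 : ℝ), IntegrableOn (fun t => ‖f t‖ ^ (-θ)) (Icc ε (T - ε))) :
    ∃ C₂ > (0 : ℝ),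
      ∫⁻ t in Ioc (0 : ℝ) T, ENNReal.ofReal (‖f' t‖ ^ 2 * ‖f t‖ ^ (-θ)) ≤
        ENNReal.ofReal
          (C₂ * (∫ t in Ioc (0 : ℝ) T, ‖f'' t‖) +
            ((if f T = 0 then 0 else
                ((inner ℝ (f T) (f' T) : ℝ) / ‖f T‖) * (‖f T‖ ^ (1 - θ) / (1 - θ))) -
             (if f 0 = 0 then 0 else
                ((inner ℝ (f 0) (f' 0) : ℝ) / ‖f 0‖) * (‖f 0‖ ^ (1 - θ) / (1 - θ))))) := by
  have hθ1' : (0:ℝ) < 1 - θ := by linarith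
  have hfc : ContinuousOn f (Icc (0:ℝ) T) :=
    fun t ht => (hderiv t ht).continuousAt.continuousWithinAt
  obtain ⟨M, hM⟩ : ∃ M, ∀ t ∈ Icc (0:ℝ) T, ‖f t‖ ≤ M := by
    obtain ⟨x, -, hx⟩ := isCompact_Icc.exists_isMaxOn (nonempty_Icc.2 hT.le) hfc.norm
    exact ⟨‖f x‖, fun t ht => hx ht⟩
  obtain ⟨M', hM'⟩ : ∃ M', ∀ t ∈ Icc (0:ℝ) T, ‖f' t‖ ≤ M' := by
    obtain ⟨x, -, hx⟩ := isCompact_Icc.exists_isMaxOn (nonempty_Icc.2 hT.le) hf'cont.norm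
    exact ⟨‖f' x‖, fun t ht => hx ht⟩
  set I : ℝ := ∫ t in Ioc (0:ℝ) T, ‖f'' t‖ with hIdef
  set c₂ : ℝ := (M^2+1) ^ ((1-θ)/2 : ℝ) with hc₂def
  have hc₂pos : 0 < c₂ := Real.rpow_pos_of_pos (by positivity) _
  refine ⟨c₂ / (1-θ), div_pos hc₂pos hθ1', ?_⟩
  set C₂ : ℝ := c₂ / (1-θ) with hC₂def
  set R : ℝ → ℝ := fun t => if f t = 0 then 0 else
      ((inner ℝ (f t) (f' t) : ℝ) / ‖f t‖) * (‖f t‖ ^ (1 - θ) / (1 - θ)) with hRdef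
  -- convergence of R along sequences
  have hRlim : ∀ c ∈ Icc (0:ℝ) T, ∀ u : ℕ → ℝ, (∀ k, u k ∈ Icc (0:ℝ) T) →
      Tendsto u atTop (𝓝 c) → Tendsto (fun k => R (u k)) atTop (𝓝 (R c)) := by
    intro c hc u hu hlim
    have hfu : Tendsto (fun k => f (u k)) atTop (𝓝 (f c)) :=
      (hfc c hc).tendsto.comp
        (tendsto_nhdsWithin_of_tendsto_nhds_of_eventually_within u hlim
          (Eventually.of_forall hu))
    have hf'u : Tendsto (fun k => f' (u k)) atTop (𝓝 (f' c)) :=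
      (hf'cont c hc).tendsto.comp
        (tendsto_nhdsWithin_of_tendsto_nhds_of_eventually_within u hlim
          (Eventually.of_forall hu))
    by_cases hfc0 : f c = 0
    · have hRc : R c = 0 := by rw [hRdef]; simp [hfc0]
      rw [hRc]
      have hbound : ∀ k, ‖R (u k)‖ ≤ ‖f (u k)‖ ^ (1-θ : ℝ) * ‖f' (u k)‖ / (1-θ) := by
        intro k
        rw [Real.norm_eq_abs]
        by_cases h : f (u k) = 0
        · rw [hRdef]
          simp only [h, if_pos, abs_zero]
          positivity
        · rw [hRdef]; simp only [if_neg h]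
          have hn : (0:ℝ) < ‖f (u k)‖ := norm_pos_iff.2 h
          have a1 : |(inner ℝ (f (u k)) (f' (u k)) : ℝ) / ‖f (u k)‖| ≤ ‖f' (u k)‖ := by
            rw [abs_div, abs_of_nonneg (norm_nonneg _), div_le_iff₀ hn]
            calc |(inner ℝ (f (u k)) (f' (u k)) : ℝ)| ≤ ‖f (u k)‖ * ‖f' (u k)‖ :=
                  abs_real_inner_le_norm _ _
              _ = ‖f' (u k)‖ * ‖f (u k)‖ := by ring
          calc |(inner ℝ (f (u k)) (f' (u k)) : ℝ) / ‖f (u k)‖ * (‖f (u k)‖ ^ (1-θ:ℝ) / (1-θ))|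
              = |(inner ℝ (f (u k)) (f' (u k)) : ℝ) / ‖f (u k)‖| * (‖f (u k)‖ ^ (1-θ:ℝ) / (1-θ)) := by
                rw [abs_mul, abs_of_nonneg (by positivity : (0:ℝ) ≤ ‖f (u k)‖ ^ (1-θ:ℝ) / (1-θ))]
            _ ≤ ‖f' (u k)‖ * (‖f (u k)‖ ^ (1-θ:ℝ) / (1-θ)) :=
                mul_le_mul_of_nonneg_right a1 (by positivity)
            _ = ‖f (u k)‖ ^ (1-θ:ℝ) * ‖f' (u k)‖ / (1-θ) := by ring
      apply squeeze_zero_norm hbound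
      have h1 : Tendsto (fun k => ‖f (u k)‖) atTop (𝓝 0) := by
        have := hfu.norm
        rwa [hfc0, norm_zero] at this
      have h2 : Tendsto (fun k => ‖f (u k)‖ ^ (1-θ:ℝ)) atTop (𝓝 0) := by
        have hcn : ContinuousAt (fun x : ℝ => x ^ (1-θ:ℝ)) 0 :=
          Real.continuousAt_rpow_const 0 _ (Or.inr hθ1'.le)
        have h3 := hcn.tendsto.comp h1
        simpa [Real.zero_rpow (ne_of_gt hθ1'), Function.comp_def] using h3
      have h4 := (h2.mul hf'u.norm).div_const (1-θ)
      simpa using h4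
    · have hev : ∀ᶠ k in atTop, f (u k) ≠ 0 := hfu.eventually_ne hfc0
      have hnc : ‖f c‖ ≠ 0 := norm_ne_zero_iff.2 hfc0
      have hnn : Tendsto (fun k => ‖f (u k)‖) atTop (𝓝 ‖f c‖) := hfu.norm
      have hrp : Tendsto (fun k => ‖f (u k)‖ ^ (1-θ:ℝ)) atTop (𝓝 (‖f c‖ ^ (1-θ:ℝ))) :=
        (Real.continuousAt_rpow_const _ _ (Or.inl hnc)).tendsto.comp hnn
      have htarget : Tendsto (fun k => ((inner ℝ (f (u k)) (f' (u k)) : ℝ) / ‖f (u k)‖) *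
          (‖f (u k)‖ ^ (1-θ:ℝ) / (1-θ))) atTop
          (𝓝 (((inner ℝ (f c) (f' c) : ℝ) / ‖f c‖) * (‖f c‖ ^ (1-θ:ℝ) / (1-θ)))) :=
        ((hfu.inner hf'u).div hnn hnc).mul (hrp.div_const _)
      have hRc : R c = ((inner ℝ (f c) (f' c) : ℝ) / ‖f c‖) * (‖f c‖ ^ (1-θ:ℝ) / (1-θ)) := by
        rw [hRdef]; simp only [if_neg hfc0]
      rw [hRc]
      apply Tendsto.congr' _ htarget
      filter_upwards [hev] with k hk
      rw [hRdef]; simp only [if_neg hk]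
  -- step 2: for fixed [a,b] ⊂ (0,T), lintegral bound via δ ↓ 0
  have hKEY2 : ∀ a b : ℝ, 0 < a → a ≤ b → b < T →
      (∫⁻ t in Ioc a b, ENNReal.ofReal (‖f' t‖ ^ 2 * ‖f t‖ ^ (-θ))) ≤
        ENNReal.ofReal (C₂ * I + (R b - R a)) := by
    intro a b ha hab hbT
    have hIccsub : Icc a b ⊆ Icc (0:ℝ) T := Icc_subset_Icc ha.le hbT.le
    have hamem : a ∈ Icc (0:ℝ) T := hIccsub (left_mem_Icc.2 hab)
    have hbmem : b ∈ Icc (0:ℝ) T := hIccsub (right_mem_Icc.2 hab)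
    have hf_ab : ContinuousOn f (Icc a b) := hfc.mono hIccsub
    have hf'_ab : ContinuousOn f' (Icc a b) := hf'cont.mono hIccsub
    set δs : ℕ → ℝ := fun j => 1/(j+1) with hδsdef
    have hδpos : ∀ j : ℕ, 0 < δs j := fun j => by positivity
    have hδle1 : ∀ j : ℕ, δs j ≤ 1 := fun j => by
      rw [hδsdef, div_le_one (by positivity)]
      simp
    have hδanti : ∀ ⦃i j : ℕ⦄, i ≤ j → δs j ≤ δs i := fun i j hij => by
      apply one_div_le_one_div_of_le (by positivity)
      have : (i:ℝ) ≤ (j:ℝ) := Nat.cast_le.2 hij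
      linarith
    have hδto0 : Tendsto δs atTop (𝓝 0) := tendsto_one_div_add_atTop_nhds_zero_nat
    have hbase : ∀ (j : ℕ) (t : ℝ), (0:ℝ) < ‖f t‖^2 + δs j := fun j t => by
      have := hδpos j; positivity
    have hcont : ∀ j : ℕ, ContinuousOn
        (fun t => ‖f' t‖ ^ 2 * (‖f t‖^2 + δs j) ^ (-θ/2 : ℝ)) (Icc a b) := fun j =>
      (hf'_ab.norm.pow 2).mul (((hf_ab.norm.pow 2).add continuousOn_const).rpow_const
        (fun t _ => Or.inl (ne_of_gt (hbase j t))))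
    have hrpeq : ∀ t : ℝ, f t ≠ 0 → ((‖f t‖:ℝ)^2) ^ (-θ/2 : ℝ) = ‖f t‖ ^ (-θ) := by
      intro t h
      rw [← Real.rpow_natCast ‖f t‖ 2, ← Real.rpow_mul (norm_nonneg _)]
      congr 1
      push_cast
      ring
    -- monotone convergence in δ
    have hmct : Tendsto (fun j => ∫⁻ t in Ioc a b,
        ENNReal.ofReal (‖f' t‖ ^ 2 * (‖f t‖^2 + δs j) ^ (-θ/2 : ℝ))) atTop
        (𝓝 (∫⁻ t in Ioc a b, ENNReal.ofReal (‖f' t‖ ^ 2 * ‖f t‖ ^ (-θ)))) := by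
      apply lintegral_tendsto_of_tendsto_of_monotone
      · intro j
        apply ENNReal.measurable_ofReal.comp_aemeasurable
        exact ((hcont j).mono Ioc_subset_Icc_self).aemeasurable measurableSet_Ioc
      · apply ae_of_all
        intro t i j hij
        apply ENNReal.ofReal_le_ofReal
        apply mul_le_mul_of_nonneg_left _ (by positivity)
        exact Real.rpow_le_rpow_of_nonpos (hbase j t) (by linarith [hδanti hij]) (by linarith)
      · have hne' : ∀ᵐ t ∂(volume.restrict (Ioc a b)), f t ≠ 0 :=
          ae_restrict_of_ae_restrict_of_subset (Ioc_subset_Icc_self.trans hIccsub) hne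
        filter_upwards [hne'] with t htne
        apply (ENNReal.continuous_ofReal.tendsto _).comp
        have hft : (0:ℝ) < ‖f t‖ := norm_pos_iff.2 htne
        have h1 : Tendsto (fun j => ‖f t‖^2 + δs j) atTop (𝓝 (‖f t‖^2)) := by
          simpa using tendsto_const_nhds.add hδto0
        have h2 : ContinuousAt (fun x : ℝ => x ^ (-θ/2 : ℝ)) (‖f t‖^2) :=
          Real.continuousAt_rpow_const _ _ (Or.inl (ne_of_gt (pow_pos hft 2)))
        have h3 := (h2.tendsto.comp h1).const_mul (‖f' t‖^2)
        rw [hrpeq t htne] at h3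
        exact h3
    -- per-j bound via key_ineq
    have hperj : ∀ j : ℕ, (∫⁻ t in Ioc a b,
        ENNReal.ofReal (‖f' t‖ ^ 2 * (‖f t‖^2 + δs j) ^ (-θ/2 : ℝ))) ≤
          ENNReal.ofReal ((c₂ * I +
            ((inner ℝ (f b) (f' b) : ℝ) * (‖f b‖^2 + δs j) ^ (-θ/2 : ℝ)
              - (inner ℝ (f a) (f' a) : ℝ) * (‖f a‖^2 + δs j) ^ (-θ/2 : ℝ))) / (1-θ)) := by
      intro j
      have hIntble : IntegrableOn
          (fun t => ‖f' t‖ ^ 2 * (‖f t‖^2 + δs j) ^ (-θ/2 : ℝ)) (Ioc a b) :=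
        ((hcont j).integrableOn_Icc).mono_set Ioc_subset_Icc_self
      have h0le : 0 ≤ᵐ[volume.restrict (Ioc a b)]
          (fun t => ‖f' t‖ ^ 2 * (‖f t‖^2 + δs j) ^ (-θ/2 : ℝ)) := by
        apply ae_of_all
        intro t
        have := hbase j t
        positivity
      rw [← ofReal_integral_eq_lintegral_ofReal hIntble h0le]
      apply ENNReal.ofReal_le_ofReal
      have hki := key_ineq hT hθ₀ hθ₁ hderiv hf'cont hf''loc hf''int hM hM'
        ha hab hbT (hδpos j) (hδle1 j)
      rwa [intervalIntegral.integral_of_le hab] at hki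
    -- limit of the right-hand side
    have hSlim : ∀ c ∈ Icc (0:ℝ) T, Tendsto
        (fun j => (inner ℝ (f c) (f' c) : ℝ) * (‖f c‖^2 + δs j) ^ (-θ/2 : ℝ)) atTop
        (𝓝 ((1-θ) * R c)) := by
      intro c hc
      by_cases h : f c = 0
      · have : ∀ j : ℕ, (inner ℝ (f c) (f' c) : ℝ) * (‖f c‖^2 + δs j) ^ (-θ/2 : ℝ) = 0 := by
          intro j
          rw [h]
          simp
        rw [funext this]
        have hR0 : R c = 0 := by rw [hRdef]; simp [h]
        rw [hR0, mul_zero]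
        exact tendsto_const_nhds
      · have hft : (0:ℝ) < ‖f c‖ := norm_pos_iff.2 h
        have h1 : Tendsto (fun j => ‖f c‖^2 + δs j) atTop (𝓝 (‖f c‖^2)) := by
          simpa using tendsto_const_nhds.add hδto0
        have h2 : ContinuousAt (fun x : ℝ => x ^ (-θ/2 : ℝ)) (‖f c‖^2) :=
          Real.continuousAt_rpow_const _ _ (Or.inl (ne_of_gt (pow_pos hft 2)))
        have h4 := (h2.tendsto.comp h1).const_mul (inner ℝ (f c) (f' c) : ℝ)
        have heq : (inner ℝ (f c) (f' c) : ℝ) * ((‖f c‖^2 : ℝ)) ^ (-θ/2 : ℝ) = (1-θ) * R c := by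
          have e1 : ((‖f c‖:ℝ)^2) ^ (-θ/2 : ℝ) = ‖f c‖ ^ (-θ) := by
            rw [← Real.rpow_natCast ‖f c‖ 2, ← Real.rpow_mul (norm_nonneg _)]
            congr 1
            push_cast
            ring
          have e2 : (‖f c‖:ℝ) ^ (1-θ : ℝ) = ‖f c‖ ^ (-θ : ℝ) * ‖f c‖ := by
            have e3 : (1-θ:ℝ) = -θ + 1 := by ring
            rw [e3, Real.rpow_add hft, Real.rpow_one]
          rw [hRdef]
          simp only [if_neg h]
          rw [e1, e2]
          field_simp
        rw [heq] at h4
        exact h4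
    have hconv : Tendsto (fun j => (c₂ * I +
        ((inner ℝ (f b) (f' b) : ℝ) * (‖f b‖^2 + δs j) ^ (-θ/2 : ℝ)
          - (inner ℝ (f a) (f' a) : ℝ) * (‖f a‖^2 + δs j) ^ (-θ/2 : ℝ))) / (1-θ)) atTop
        (𝓝 (C₂ * I + (R b - R a))) := by
      have h5 := (Tendsto.add (tendsto_const_nhds (x := c₂ * I)) ((hSlim b hbmem).sub (hSlim a hamem))).div_const (1-θ)
      have h6 : (c₂ * I + ((1-θ) * R b - (1-θ) * R a)) / (1-θ) = C₂ * I + (R b - R a) := by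
        rw [hC₂def]
        field_simp
      rwa [h6] at h5
    exact le_of_tendsto_of_tendsto hmct
      ((ENNReal.continuous_ofReal.tendsto _).comp hconv)
      (Eventually.of_forall hperj)
  -- step 3: exhaust (0,T)
  set ak : ℕ → ℝ := fun k => T/(k+4) with hakdef
  set bk : ℕ → ℝ := fun k => T - ak k with hbkdef
  have hk4 : ∀ k : ℕ, (0:ℝ) < (k:ℝ) + 4 := fun k => by positivity
  have hak0 : ∀ k, 0 < ak k := fun k => div_pos hT (hk4 k)
  have hakT4 : ∀ k, ak k ≤ T/4 := fun k => by
    simp only [hakdef]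
    apply div_le_div_of_nonneg_left hT.le (by norm_num)
    have : (0:ℝ) ≤ (k:ℝ) := Nat.cast_nonneg k
    linarith
  have hakb : ∀ k, ak k ≤ bk k := fun k => by
    have h1 := hakT4 k
    simp only [hbkdef]
    linarith
  have hbkT : ∀ k, bk k < T := fun k => by
    have := hak0 k
    simp only [hbkdef]
    linarith
  have hakanti : ∀ ⦃i j : ℕ⦄, i ≤ j → ak j ≤ ak i := fun i j hij => by
    simp only [hakdef]
    apply div_le_div_of_nonneg_left hT.le (hk4 i)
    have : (i:ℝ) ≤ (j:ℝ) := Nat.cast_le.2 hij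
    linarith
  have hbkmono : ∀ ⦃i j : ℕ⦄, i ≤ j → bk i ≤ bk j := fun i j hij => by
    simp only [hbkdef]
    have := hakanti hij
    simp only [ge_iff_le]
    linarith
  have hmono : Monotone (fun k => Ioc (ak k) (bk k)) := fun i j hij =>
    Ioc_subset_Ioc (hakanti hij) (hbkmono hij)
  have haktend : Tendsto ak atTop (𝓝 0) :=
    Tendsto.div_atTop tendsto_const_nhds
      (tendsto_atTop_add_const_right _ 4 tendsto_natCast_atTop_atTop)
  have hbktend : Tendsto bk atTop (𝓝 T) := by
    have h2 := (tendsto_const_nhds (x := T)).sub haktend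
    simpa using h2
  have hakmem : ∀ k, ak k ∈ Icc (0:ℝ) T := fun k =>
    ⟨(hak0 k).le, by have := hakT4 k; linarith⟩
  have hbkmem : ∀ k, bk k ∈ Icc (0:ℝ) T := fun k =>
    ⟨by have := hakT4 k; simp only [hbkdef]; linarith, (hbkT k).le⟩
  have hUnion : (⋃ k, Ioc (ak k) (bk k)) = Ioo (0:ℝ) T := by
    ext x
    simp only [mem_iUnion, mem_Ioc, mem_Ioo]
    constructor
    · rintro ⟨k, h1, h2⟩
      exact ⟨(hak0 k).trans h1, lt_of_le_of_lt h2 (hbkT k)⟩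
    · rintro ⟨h1, h2⟩
      have hm : 0 < min x (T - x) := lt_min h1 (by linarith)
      obtain ⟨k, hk⟩ := exists_nat_gt (T / min x (T - x))
      have h7 : T / ((k:ℝ)+4) < min x (T-x) := by
        rw [div_lt_iff₀ (hk4 k)]
        have h8 : T / min x (T-x) < (k:ℝ)+4 := by
          have : (0:ℝ) ≤ (k:ℝ) := Nat.cast_nonneg k
          linarith
        calc T = (T / min x (T-x)) * min x (T-x) := by field_simp
          _ < ((k:ℝ)+4) * min x (T-x) := mul_lt_mul_of_pos_right h8 hm
          _ = min x (T-x) * ((k:ℝ)+4) := by ring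
      refine ⟨k, ?_, ?_⟩
      · exact lt_of_lt_of_le h7 (min_le_left _ _)
      · have h9 := h7.trans_le (min_le_right _ _)
        simp only [hbkdef, hakdef]
        linarith
  have hdir : Directed (· ⊆ ·) (fun k => Ioc (ak k) (bk k)) := hmono.directed_le
  have hRb : Tendsto (fun j => R (bk j)) atTop (𝓝 (R T)) :=
    hRlim T ⟨hT.le, le_rfl⟩ bk hbkmem hbktend
  have hRa : Tendsto (fun j => R (ak j)) atTop (𝓝 (R 0)) :=
    hRlim 0 ⟨le_rfl, hT.le⟩ ak hakmem haktend
  have hfold : ENNReal.ofReal (C₂ * I +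
      ((if f T = 0 then (0:ℝ) else
          ((inner ℝ (f T) (f' T) : ℝ) / ‖f T‖) * (‖f T‖ ^ (1 - θ) / (1 - θ))) -
       (if f 0 = 0 then (0:ℝ) else
          ((inner ℝ (f 0) (f' 0) : ℝ) / ‖f 0‖) * (‖f 0‖ ^ (1 - θ) / (1 - θ))))) =
      ENNReal.ofReal (C₂ * I + (R T - R 0)) := by
    rw [hRdef]
  rw [hfold]
  calc (∫⁻ t in Ioc (0:ℝ) T, ENNReal.ofReal (‖f' t‖ ^ 2 * ‖f t‖ ^ (-θ)))
      = ∫⁻ t in Ioo (0:ℝ) T, ENNReal.ofReal (‖f' t‖ ^ 2 * ‖f t‖ ^ (-θ)) := by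
        rw [Measure.restrict_congr_set (Ioo_ae_eq_Ioc)]
    _ = ∫⁻ t in ⋃ k, Ioc (ak k) (bk k), ENNReal.ofReal (‖f' t‖ ^ 2 * ‖f t‖ ^ (-θ)) := by
        rw [hUnion]
    _ = ⨆ k, ∫⁻ t in Ioc (ak k) (bk k), ENNReal.ofReal (‖f' t‖ ^ 2 * ‖f t‖ ^ (-θ)) :=
        setLIntegral_iUnion_of_directed _ hdir
    _ ≤ ENNReal.ofReal (C₂ * I + (R T - R 0)) := by
        apply iSup_le
        intro k
        have hRHS := (ENNReal.continuous_ofReal.tendsto _).comp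
          ((Tendsto.add (tendsto_const_nhds (x := C₂ * I)) (hRb.sub hRa)))
        apply ge_of_tendsto hRHS
        filter_upwards [eventually_ge_atTop k] with j hj
        calc (∫⁻ t in Ioc (ak k) (bk k), ENNReal.ofReal (‖f' t‖ ^ 2 * ‖f t‖ ^ (-θ)))
            ≤ ∫⁻ t in Ioc (ak j) (bk j), ENNReal.ofReal (‖f' t‖ ^ 2 * ‖f t‖ ^ (-θ)) :=
              lintegral_mono_set (hmono hj)
          _ ≤ ENNReal.ofReal (C₂ * I + (R (bk j) - R (ak j))) :=
              hKEY2 (ak j) (bk j) (hak0 j) (hakb j) (hbkT j)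
end

section
/- Let x_i, x_j : [s₁,s₂] → ℝ^d be C¹ functions with derivatives v_i = x_i', v_j = x_j', such that there is no time t in [s₁,s₂] with x_i(t) = x_j(t) and v_i(t) = v_j(t) simultaneously, and such that the set of times t where x_i(t) = x_j(t) is finite. Then for every θ ∈ (0,1), ∫_{s₁}^{s₂} |x_j(t) − x_i(t)|^{-θ} dt < ∞. -/
open MeasureTheory Set

/-- Integrability of `|t - t₀| ^ (-θ)` on a compact interval around `t₀`, for `θ < 1`. -/
lemma integrableOn_abs_rpow_neg {θ : ℝ} (hθ1 : θ < 1) (t₀ δ : ℝ) (hδ : 0 < δ) :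
    IntegrableOn (fun t => |t - t₀| ^ (-θ)) (Icc (t₀ - δ) (t₀ + δ)) := by
  have hbase : IntervalIntegrable (fun x : ℝ => x ^ (-θ)) volume 0 δ :=
    intervalIntegral.intervalIntegrable_rpow' (by linarith)
  have hR : IntegrableOn (fun t => |t - t₀| ^ (-θ)) (Icc t₀ (t₀ + δ)) := by
    have h1 := hbase.comp_sub_right t₀
    rw [show (0 : ℝ) + t₀ = t₀ by ring, show δ + t₀ = t₀ + δ by ring,
      intervalIntegrable_iff_integrableOn_Icc_of_le (by linarith)] at h1
    exact h1.congr_fun (fun t ht => by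
      simp only [abs_of_nonneg (sub_nonneg.2 ht.1)]) measurableSet_Icc
  have hL : IntegrableOn (fun t => |t - t₀| ^ (-θ)) (Icc (t₀ - δ) t₀) := by
    have h1 := (hbase.comp_sub_left t₀).symm
    rw [show t₀ - 0 = t₀ by ring] at h1
    rw [intervalIntegrable_iff_integrableOn_Icc_of_le (by linarith)] at h1
    exact h1.congr_fun (fun t ht => by
      rw [abs_sub_comm, abs_of_nonneg (sub_nonneg.2 ht.2)]) measurableSet_Icc
  have := hL.union hR
  rwa [Icc_union_Icc_eq_Icc (by linarith) (by linarith)] at this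

/-- Lemma 3.3: if two `C¹` trajectories never stick on `[s₁,s₂]` (no time with equal
positions and equal velocities) and collide only finitely many times, then
`∫_{s₁}^{s₂} |x_j − x_i|^{−θ} dt < ∞` for every `θ ∈ (0,1)`. -/
theorem stmt_5
    (d : ℕ) (s₁ s₂ : ℝ) (hs : s₁ < s₂)
    (xi xj vi vj : ℝ → EuclideanSpace ℝ (Fin d))
    (hxi : ∀ t ∈ Icc s₁ s₂, HasDerivAt xi (vi t) t)
    (hxj : ∀ t ∈ Icc s₁ s₂, HasDerivAt xj (vj t) t)
    (hvi : ContinuousOn vi (Icc s₁ s₂))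
    (hvj : ContinuousOn vj (Icc s₁ s₂))
    -- no sticking on `[s₁,s₂]`
    (hnostick : ∀ t ∈ Icc s₁ s₂, ¬(xi t = xj t ∧ vi t = vj t))
    -- finitely many collisions
    (hfin : {t ∈ Icc s₁ s₂ | xi t = xj t}.Finite) :
    ∀ θ ∈ Ioo (0 : ℝ) 1,
      IntegrableOn (fun t => ‖xj t - xi t‖ ^ (-θ)) (Icc s₁ s₂) := by
  intro θ hθ
  obtain ⟨hθ0, hθ1⟩ := hθ
  have hθneg : -θ ≤ (0 : ℝ) := by linarith
  set f : ℝ → EuclideanSpace ℝ (Fin d) := fun t => xj t - xi t with hfdef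
  set g : ℝ → ℝ := fun t => ‖f t‖ ^ (-θ) with hgdef
  have hf : ∀ t ∈ Icc s₁ s₂, HasDerivAt f (vj t - vi t) t :=
    fun t ht => (hxj t ht).sub (hxi t ht)
  have hfc : ContinuousOn f (Icc s₁ s₂) :=
    fun t ht => (hf t ht).continuousAt.continuousWithinAt
  -- nonnegativity of g
  have hgnn : ∀ t, 0 ≤ g t := fun t => Real.rpow_nonneg (norm_nonneg _) _
  -- measurability of g on measurable subsets of Icc
  have hmeas : ∀ s : Set ℝ, MeasurableSet s → s ⊆ Icc s₁ s₂ →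
      AEStronglyMeasurable g (volume.restrict s) := by
    intro s hsm hsub
    have h1 : AEMeasurable (fun t => ‖f t‖) (volume.restrict s) :=
      ((hfc.mono hsub).norm).aemeasurable hsm
    have h2 : Measurable fun x : ℝ => x ^ (-θ) := by fun_prop
    exact (h2.comp_aemeasurable h1).aestronglyMeasurable
  -- local integrability
  have hloc : LocallyIntegrableOn g (Icc s₁ s₂) := by
    intro t₀ ht₀
    by_cases hcol : f t₀ = 0
    · -- collision time: relative velocity is nonzero
      have hxeq : xi t₀ = xj t₀ := by
        have := sub_eq_zero.1 hcol; exact this.symm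
      have hwne : vj t₀ - vi t₀ ≠ 0 := by
        intro h
        exact hnostick t₀ ht₀ ⟨hxeq, (sub_eq_zero.1 h).symm⟩
      set w : EuclideanSpace ℝ (Fin d) := vj t₀ - vi t₀ with hwdef
      have hwpos : 0 < ‖w‖ := norm_pos_iff.2 hwne
      set c : ℝ := ‖w‖ / 2 with hcdef
      have hcpos : 0 < c := by positivity
      -- from the derivative: ‖f t‖ ≥ c |t - t₀| near t₀
      have hder := (hasDerivAt_iff_isLittleO.1 (hf t₀ ht₀)).def hcpos
      rw [Metric.eventually_nhds_iff] at hder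
      obtain ⟨ε, hε, hball⟩ := hder
      set δ : ℝ := ε / 2 with hδdef
      have hδpos : 0 < δ := by positivity
      have hlow : ∀ t ∈ Icc (t₀ - δ) (t₀ + δ), c * |t - t₀| ≤ ‖f t‖ := by
        intro t ht
        have hdist : dist t t₀ < ε := by
          rw [Real.dist_eq]
          have h1 : t - t₀ ≤ δ := by linarith [ht.2]
          have h2 : -δ ≤ t - t₀ := by linarith [ht.1]
          have h3 : |t - t₀| ≤ δ := abs_le.2 ⟨h2, h1⟩
          have : δ < ε := by rw [hδdef]; linarith
          linarith
        have hb := hball hdist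
        simp only [hcol, sub_zero] at hb
        have h4 : ‖f t - (t - t₀) • w‖ ≤ c * |t - t₀| := by
          simpa [Real.norm_eq_abs, hwdef] using hb
        have h1 : ‖(t - t₀) • w‖ ≤ ‖f t‖ + ‖f t - (t - t₀) • w‖ := by
          have h := norm_sub_le (f t) (f t - (t - t₀) • w)
          simpa using h
        have h3 : ‖(t - t₀) • w‖ = |t - t₀| * ‖w‖ := by
          rw [norm_smul, Real.norm_eq_abs]
        have h5 : |t - t₀| * ‖w‖ = 2 * (c * |t - t₀|) := by rw [hcdef]; ring
        linarith
      -- the dominating function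
      set U : Set ℝ := Icc s₁ s₂ ∩ Icc (t₀ - δ) (t₀ + δ) with hUdef
      have hUm : MeasurableSet U := measurableSet_Icc.inter measurableSet_Icc
      have hUsub1 : U ⊆ Icc s₁ s₂ := inter_subset_left
      have hUsub2 : U ⊆ Icc (t₀ - δ) (t₀ + δ) := inter_subset_right
      refine ⟨U, ?_, ?_⟩
      · exact inter_mem_nhdsWithin _ (Icc_mem_nhds (by linarith) (by linarith))
      · have h0 : IntegrableOn (fun t => |t - t₀| ^ (-θ)) U :=
          (integrableOn_abs_rpow_neg hθ1 t₀ δ hδpos).mono_set hUsub2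
        have hbound : IntegrableOn (fun t => c ^ (-θ) * |t - t₀| ^ (-θ)) U :=
          h0.const_mul (c ^ (-θ))
        refine Integrable.mono' hbound (hmeas U hUm hUsub1) ?_
        rw [ae_restrict_iff' hUm]
        refine ae_of_all _ fun t ht => ?_
        rw [Real.norm_eq_abs, abs_of_nonneg (hgnn t)]
        by_cases hteq : t = t₀
        · subst hteq
          simp [hgdef, hcol, Real.zero_rpow (by linarith : -θ ≠ 0)]
        · have habs : 0 < |t - t₀| := abs_pos.2 (sub_ne_zero.2 hteq)
          have hlb : c * |t - t₀| ≤ ‖f t‖ := hlow t ht.2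
          have hpos : 0 < c * |t - t₀| := by positivity
          calc g t ≤ (c * |t - t₀|) ^ (-θ) :=
                Real.rpow_le_rpow_of_nonpos hpos hlb hθneg
            _ = c ^ (-θ) * |t - t₀| ^ (-θ) :=
                Real.mul_rpow hcpos.le (abs_nonneg _)
    · -- no collision: locally bounded
      have hnpos : 0 < ‖f t₀‖ := norm_pos_iff.2 hcol
      have hcont : ContinuousWithinAt (fun t => ‖f t‖) (Icc s₁ s₂) t₀ :=
        (hfc t₀ ht₀).norm
      have hev : ∀ᶠ t in nhdsWithin t₀ (Icc s₁ s₂), ‖f t‖ ∈ Ioi (‖f t₀‖ / 2) :=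
        hcont (Ioi_mem_nhds (by linarith))
      obtain ⟨V, hVmem, hVsub⟩ := Filter.eventually_iff_exists_mem.1 hev
      -- choose a measurable small set inside V
      rw [mem_nhdsWithin] at hVmem
      obtain ⟨O, hOopen, hOt₀, hOsub⟩ := hVmem
      obtain ⟨ε, hε, hballsub⟩ := Metric.isOpen_iff.1 hOopen t₀ hOt₀
      set U : Set ℝ := Icc s₁ s₂ ∩ Icc (t₀ - ε/2) (t₀ + ε/2) with hUdef
      have hUm : MeasurableSet U := measurableSet_Icc.inter measurableSet_Icc
      have hUsubV : U ⊆ V := by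
        intro t ht
        refine hOsub ⟨hballsub ?_, ht.1⟩
        rw [Metric.mem_ball, Real.dist_eq, abs_lt]
        constructor <;> [linarith [ht.2.1]; linarith [ht.2.2]]
      have hUsub1 : U ⊆ Icc s₁ s₂ := inter_subset_left
      refine ⟨U, inter_mem_nhdsWithin _ (Icc_mem_nhds (by linarith) (by linarith)), ?_⟩
      have hUvol : volume U < ⊤ :=
        (measure_mono hUsub1).trans_lt measure_Icc_lt_top
      have hconst : IntegrableOn (fun _ : ℝ => (‖f t₀‖ / 2) ^ (-θ)) U :=
        integrableOn_const hUvol.ne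
      refine Integrable.mono' hconst (hmeas U hUm hUsub1) ?_
      rw [ae_restrict_iff' hUm]
      refine ae_of_all _ fun t ht => ?_
      rw [Real.norm_eq_abs, abs_of_nonneg (hgnn t)]
      have h1 : ‖f t₀‖ / 2 < ‖f t‖ := hVsub t (hUsubV ht)
      exact Real.rpow_le_rpow_of_nonpos (by linarith) h1.le hθneg
  exact hloc.integrableOn_isCompact isCompact_Icc
end

section
/- Let v_i, v_j : [t₀, t₀+δ] → ℝ^d be continuous with v_j(t) − v_i(t) ∈ B(w, ρ) for all t in [t₀, t₀+δ], where w ∈ ℝ^d, ρ > 0, and 0 ∉ B(w, ρ) (the closed ball of radius ρ around w). Suppose x_i, x_j are C¹ with x_i' = v_i, x_j' = v_j and x_i(t₀) = x_j(t₀). Then there is c > 0 with |x_j(t) − x_i(t)| ≥ c (t − t₀) for all t ∈ [t₀, t₀+δ], and consequently ∫_{t₀}^{t₀+δ} |x_j(t) − x_i(t)|^{-θ} dt < ∞ for every θ ∈ (0,1). -/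
open MeasureTheory Set

/-- If `v_j − v_i` stays in a closed ball `B(w,ρ)` not containing `0` on `[t₀, t₀+δ]` and
`x_i(t₀) = x_j(t₀)`, then `|x_j(t) − x_i(t)| ≥ c (t − t₀)` for some `c > 0`, and hence
`∫_{t₀}^{t₀+δ} |x_j − x_i|^{−θ} dt < ∞` for every `θ ∈ (0,1)`. -/
theorem stmt_6
    (d : ℕ) (t₀ δ : ℝ) (hδ : 0 < δ)
    (xi xj vi vj : ℝ → EuclideanSpace ℝ (Fin d))
    (w : EuclideanSpace ℝ (Fin d)) (ρ : ℝ) (hρ : 0 < ρ)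
    (h0 : (0 : EuclideanSpace ℝ (Fin d)) ∉ Metric.closedBall w ρ)
    (hvi : ContinuousOn vi (Icc t₀ (t₀ + δ)))
    (hvj : ContinuousOn vj (Icc t₀ (t₀ + δ)))
    (hball : ∀ t ∈ Icc t₀ (t₀ + δ), vj t - vi t ∈ Metric.closedBall w ρ)
    (hxi : ∀ t ∈ Icc t₀ (t₀ + δ), HasDerivAt xi (vi t) t)
    (hxj : ∀ t ∈ Icc t₀ (t₀ + δ), HasDerivAt xj (vj t) t)
    (hx0 : xi t₀ = xj t₀) :
    (∃ c > (0 : ℝ), ∀ t ∈ Icc t₀ (t₀ + δ), c * (t - t₀) ≤ ‖xj t - xi t‖) ∧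
    ∀ θ ∈ Ioo (0 : ℝ) 1,
      IntegrableOn (fun t => ‖xj t - xi t‖ ^ (-θ)) (Icc t₀ (t₀ + δ)) := by
  have hw : ρ < ‖w‖ := by
    simpa [dist_eq_norm] using h0
  have hwpos : (0 : ℝ) < ‖w‖ := hρ.trans hw
  set c : ℝ := ‖w‖ - ρ with hc
  have hcpos : 0 < c := by simp [hc]; linarith
  set y : ℝ → EuclideanSpace ℝ (Fin d) := fun t => xj t - xi t with hy
  have hdy : ∀ t ∈ Icc t₀ (t₀ + δ), HasDerivAt y (vj t - vi t) t :=
    fun t ht => (hxj t ht).sub (hxi t ht)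
  set g : ℝ → ℝ := fun t => inner ℝ w (y t) with hg
  have hdg : ∀ t ∈ Icc t₀ (t₀ + δ),
      HasDerivAt g (inner ℝ w (vj t - vi t) : ℝ) t := by
    intro t ht
    have := (hasDerivAt_const t w).inner ℝ (hdy t ht)
    simpa using this
  -- lower bound on the derivative of g
  have hinner : ∀ ξ : EuclideanSpace ℝ (Fin d), ξ ∈ Metric.closedBall w ρ →
      ‖w‖ * c ≤ (inner ℝ w ξ : ℝ) := by
    intro ξ hξ
    have h1 : (inner ℝ w ξ : ℝ) = (inner ℝ w w : ℝ) + inner ℝ w (ξ - w) := by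
      rw [← inner_add_right, add_sub_cancel]
    have h2 : (inner ℝ w w : ℝ) = ‖w‖ ^ 2 := real_inner_self_eq_norm_sq w
    have h3 : |(inner ℝ w (ξ - w) : ℝ)| ≤ ‖w‖ * ‖ξ - w‖ := abs_real_inner_le_norm _ _
    have h4 : ‖ξ - w‖ ≤ ρ := by
      simpa [dist_eq_norm] using Metric.mem_closedBall.mp hξ
    have h5 : ‖w‖ * ‖ξ - w‖ ≤ ‖w‖ * ρ := by nlinarith
    have := abs_le.mp h3
    simp only [hc]
    nlinarith
  have hgt0 : g t₀ = 0 := by simp [hg, hy, hx0]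
  have key : ∀ t ∈ Icc t₀ (t₀ + δ), c * (t - t₀) ≤ ‖y t‖ := by
    intro t ht
    have hgc : ContinuousOn g (Icc t₀ (t₀ + δ)) :=
      fun s hs => (hdg s hs).continuousAt.continuousWithinAt
    have hgrow := (convex_Icc t₀ (t₀ + δ)).mul_sub_le_image_sub_of_le_deriv hgc
      (fun s hs => ((hdg s (interior_subset hs)).differentiableAt).differentiableWithinAt)
      (C := ‖w‖ * c)
      (fun s hs => by
        rw [(hdg s (interior_subset hs)).deriv]
        exact hinner _ (hball s (interior_subset hs)))
      t₀ ⟨le_refl t₀, by linarith⟩ t ht ht.1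
    rw [hgt0, sub_zero] at hgrow
    have hCS : g t ≤ ‖w‖ * ‖y t‖ := real_inner_le_norm w (y t)
    exact le_of_mul_le_mul_left (by nlinarith) hwpos
  refine ⟨⟨c, hcpos, key⟩, ?_⟩
  intro θ hθ
  obtain ⟨hθ0, hθ1⟩ := hθ
  have hycont : ContinuousOn y (Icc t₀ (t₀ + δ)) :=
    fun s hs => (hdy s hs).continuousAt.continuousWithinAt
  rw [integrableOn_Icc_iff_integrableOn_Ioc]
  have hmeas : AEStronglyMeasurable (fun t => ‖y t‖ ^ (-θ))
      (volume.restrict (Ioc t₀ (t₀ + δ))) := by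
    apply ContinuousOn.aestronglyMeasurable _ measurableSet_Ioc
    apply ContinuousOn.rpow_const ((hycont.mono Ioc_subset_Icc_self).norm)
    intro t ht
    left
    have := key t (Ioc_subset_Icc_self ht)
    have hpos : 0 < c * (t - t₀) := mul_pos hcpos (by linarith [ht.1])
    exact (hpos.trans_le this).ne'
  have hGint : IntegrableOn (fun t => c ^ (-θ) * (t - t₀) ^ (-θ)) (Ioc t₀ (t₀ + δ)) := by
    have h1 : IntervalIntegrable (fun x : ℝ => x ^ (-θ)) volume 0 δ :=
      intervalIntegral.intervalIntegrable_rpow' (by linarith)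
    have h2 := h1.comp_sub_right t₀
    rw [zero_add] at h2
    have h3 : IntegrableOn (fun t => (t - t₀) ^ (-θ)) (Ioc t₀ (t₀ + δ)) := by
      rw [add_comm δ t₀] at h2
      have h4 : IntervalIntegrable (fun t => (t - t₀) ^ (-θ)) volume t₀ (t₀ + δ) := h2
      exact (intervalIntegrable_iff_integrableOn_Ioc_of_le (by linarith)).mp h4
    exact h3.const_mul _
  refine hGint.integrable.mono' hmeas ?_
  rw [ae_restrict_iff' measurableSet_Ioc]
  filter_upwards with t ht
  have htpos : t₀ < t := ht.1
  have hpos : 0 < c * (t - t₀) := mul_pos hcpos (by linarith)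
  have hb := key t (Ioc_subset_Icc_self ht)
  have h5 : ‖y t‖ ^ (-θ) ≤ (c * (t - t₀)) ^ (-θ) :=
    Real.rpow_le_rpow_of_nonpos hpos hb (by linarith)
  have h6 : (c * (t - t₀)) ^ (-θ) = c ^ (-θ) * (t - t₀) ^ (-θ) :=
    Real.mul_rpow hcpos.le (by linarith)
  rw [Real.norm_eq_abs, abs_of_nonneg (Real.rpow_nonneg (norm_nonneg _) _)]
  rw [← h6]; exact h5
end

section
/- Let v¹, v², with v^m = (v^m_1, …, v^m_N), be two velocity fields solving the Cucker–Smale velocity equation along given trajectories, and define r(t) = Σ_{i=1}^N |v_i¹(t) − v_i²(t)|². Then for a.e. t where both solutions are differentiable, dr/dt ≤ (1/N) Σ_{i,j=1}^N |(v_i¹−v_i²) − (v_j¹−v_j²)| · |v_j²−v_i²| · |ψ(|x_j¹−x_i¹|) − ψ(|x_j²−x_i²|)|; in particular the quadratic dissipative term −(1/N) Σ_{i,j} |(v_i¹−v_i²)−(v_j¹−v_j²)|² ψ(|x_j¹−x_i¹|) can be dropped since it is nonpositive. -/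
open MeasureTheory Set

/-- Dissipation inequality for the difference of two solutions of the Cucker–Smale
velocity equation: at a point `t` where both solutions are differentiable,
`r(t) = Σ_i |v_i¹ − v_i²|²` is differentiable and its derivative is bounded by
`(1/N) Σ_{i,j} |(v_i¹−v_i²)−(v_j¹−v_j²)| |v_j²−v_i²| |ψ(|x_j¹−x_i¹|) − ψ(|x_j²−x_i²|)|`
(the quadratic dissipative term being nonpositive can be dropped). -/
theorem stmt_15
    (N d : ℕ) (hN : 1 ≤ N)
    (ψ : ℝ → ℝ) (hψ : ∀ s, 0 ≤ ψ s)
    (x₁ x₂ v₁ v₂ : ℝ → Fin N → EuclideanSpace ℝ (Fin d))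
    (t : ℝ)
    (hv₁ : ∀ i, HasDerivAt (fun s => v₁ s i)
      ((N : ℝ)⁻¹ • ∑ j, ψ ‖x₁ t j - x₁ t i‖ • (v₁ t j - v₁ t i)) t)
    (hv₂ : ∀ i, HasDerivAt (fun s => v₂ s i)
      ((N : ℝ)⁻¹ • ∑ j, ψ ‖x₂ t j - x₂ t i‖ • (v₂ t j - v₂ t i)) t) :
    ∃ r' : ℝ,
      HasDerivAt (fun s => ∑ i, ‖v₁ s i - v₂ s i‖ ^ 2) r' t ∧
      r' ≤ (N : ℝ)⁻¹ * ∑ i, ∑ j,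
        ‖(v₁ t i - v₂ t i) - (v₁ t j - v₂ t j)‖ * ‖v₂ t j - v₂ t i‖ *
          |ψ ‖x₁ t j - x₁ t i‖ - ψ ‖x₂ t j - x₂ t i‖| := by
  classical
  set w : Fin N → EuclideanSpace ℝ (Fin d) := fun i => v₁ t i - v₂ t i with hw
  set a : Fin N → Fin N → EuclideanSpace ℝ (Fin d) := fun i j =>
    ψ ‖x₁ t j - x₁ t i‖ • (v₁ t j - v₁ t i) - ψ ‖x₂ t j - x₂ t i‖ • (v₂ t j - v₂ t i) with ha
  -- derivative of each w_i
  have hwd : ∀ i, HasDerivAt (fun s => v₁ s i - v₂ s i) ((N : ℝ)⁻¹ • ∑ j, a i j) t := by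
    intro i
    have := (hv₁ i).fun_sub (hv₂ i)
    simpa [ha, smul_sub, Finset.sum_sub_distrib] using this
  -- derivative of the sum of squares
  have hD : HasDerivAt (fun s => ∑ i, ‖v₁ s i - v₂ s i‖ ^ 2)
      (∑ i, (2 : ℝ) * inner ℝ (w i) ((N : ℝ)⁻¹ • ∑ j, a i j)) t := by
    have h1 : ∀ i : Fin N, HasDerivAt (fun s => ‖v₁ s i - v₂ s i‖ ^ 2)
        ((2 : ℝ) * inner ℝ (w i) ((N : ℝ)⁻¹ • ∑ j, a i j)) t := by
      intro i
      have h := (hwd i).inner ℝ (hwd i)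
      have heq : (fun s => (inner ℝ (v₁ s i - v₂ s i) (v₁ s i - v₂ s i) : ℝ))
          = fun s => ‖v₁ s i - v₂ s i‖ ^ 2 := by
        funext s; exact real_inner_self_eq_norm_sq _
      rw [heq] at h
      refine h.congr_deriv ?_
      rw [real_inner_comm ((N : ℝ)⁻¹ • ∑ j, a i j) (w i)]
      simp only [hw]
      ring
    exact HasDerivAt.fun_sum (fun i _ => h1 i)
  refine ⟨_, hD, ?_⟩
  -- rewrite r' as N⁻¹ * 2T
  have hr' : (∑ i, (2 : ℝ) * inner ℝ (w i) ((N : ℝ)⁻¹ • ∑ j, a i j))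
      = (N : ℝ)⁻¹ * (2 * ∑ i, ∑ j, (inner ℝ (w i) (a i j) : ℝ)) := by
    rw [← mul_assoc, Finset.mul_sum]
    refine Finset.sum_congr rfl fun i _ => ?_
    rw [inner_smul_right, inner_sum]
    ring
  rw [hr']
  -- antisymmetry: a j i = - a i j
  have hanti : ∀ i j, a j i = - a i j := by
    intro i j
    simp only [ha]
    rw [norm_sub_rev (x₁ t i), norm_sub_rev (x₂ t i)]
    module
  -- symmetrization: 2T = Σ ⟪w i - w j, a i j⟫
  have hsym : (2 : ℝ) * ∑ i, ∑ j, (inner ℝ (w i) (a i j) : ℝ)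
      = ∑ i, ∑ j, (inner ℝ (w i - w j) (a i j) : ℝ) := by
    have h2 : (∑ i, ∑ j, (inner ℝ (w i) (a i j) : ℝ))
        = - ∑ i, ∑ j, (inner ℝ (w j) (a i j) : ℝ) := by
      rw [Finset.sum_comm]
      rw [← Finset.sum_neg_distrib]
      congr 1; funext j
      rw [← Finset.sum_neg_distrib]
      congr 1; funext i
      rw [hanti j i, inner_neg_right]
    have : ∀ i j : Fin N, (inner ℝ (w i - w j) (a i j) : ℝ)
        = inner ℝ (w i) (a i j) - inner ℝ (w j) (a i j) := fun i j => inner_sub_left _ _ _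
    simp only [this, Finset.sum_sub_distrib]
    rw [show (∑ i, ∑ j, (inner ℝ (w j) (a i j) : ℝ)) = - ∑ i, ∑ j, (inner ℝ (w i) (a i j) : ℝ) by
      rw [h2]; ring]
    ring
  rw [hsym]
  -- pointwise bound and conclude
  have hNpos : (0:ℝ) ≤ (N : ℝ)⁻¹ := by positivity
  apply mul_le_mul_of_nonneg_left ?_ hNpos
  apply Finset.sum_le_sum; intro i _
  apply Finset.sum_le_sum; intro j _
  -- ⟪w i - w j, a i j⟫ ≤ ‖w i - w j‖ * ‖v₂ j - v₂ i‖ * |ψ₁ - ψ₂|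
  have hdecomp : a i j = -(ψ ‖x₁ t j - x₁ t i‖ • (w i - w j))
      + (ψ ‖x₁ t j - x₁ t i‖ - ψ ‖x₂ t j - x₂ t i‖) • (v₂ t j - v₂ t i) := by
    simp only [ha, hw, sub_smul, smul_sub]
    abel
  rw [hdecomp, inner_add_right, inner_neg_right, inner_smul_right, inner_smul_right,
    real_inner_self_eq_norm_sq]
  have h1 : -(ψ ‖x₁ t j - x₁ t i‖ * ‖w i - w j‖ ^ 2) ≤ 0 :=
    neg_nonpos.mpr (mul_nonneg (hψ _) (sq_nonneg _))
  have h2 : (ψ ‖x₁ t j - x₁ t i‖ - ψ ‖x₂ t j - x₂ t i‖) *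
      (inner ℝ (w i - w j) (v₂ t j - v₂ t i) : ℝ)
      ≤ ‖w i - w j‖ * ‖v₂ t j - v₂ t i‖ * |ψ ‖x₁ t j - x₁ t i‖ - ψ ‖x₂ t j - x₂ t i‖| := by
    calc (ψ ‖x₁ t j - x₁ t i‖ - ψ ‖x₂ t j - x₂ t i‖) *
        (inner ℝ (w i - w j) (v₂ t j - v₂ t i) : ℝ)
        ≤ |(ψ ‖x₁ t j - x₁ t i‖ - ψ ‖x₂ t j - x₂ t i‖) *
          (inner ℝ (w i - w j) (v₂ t j - v₂ t i) : ℝ)| := le_abs_self _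
      _ = |ψ ‖x₁ t j - x₁ t i‖ - ψ ‖x₂ t j - x₂ t i‖| *
          |(inner ℝ (w i - w j) (v₂ t j - v₂ t i) : ℝ)| := abs_mul _ _
      _ ≤ |ψ ‖x₁ t j - x₁ t i‖ - ψ ‖x₂ t j - x₂ t i‖| *
          (‖w i - w j‖ * ‖v₂ t j - v₂ t i‖) := by
          apply mul_le_mul_of_nonneg_left (abs_real_inner_le_norm _ _) (abs_nonneg _)
      _ = ‖w i - w j‖ * ‖v₂ t j - v₂ t i‖ *
          |ψ ‖x₁ t j - x₁ t i‖ - ψ ‖x₂ t j - x₂ t i‖| := by ring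
  calc _ ≤ 0 + (ψ ‖x₁ t j - x₁ t i‖ - ψ ‖x₂ t j - x₂ t i‖) *
        (inner ℝ (w i - w j) (v₂ t j - v₂ t i) : ℝ) := by linarith
    _ ≤ _ := by simpa [hw] using h2
end
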